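/- Let q be a primitive n-th root of unity and f ∈ k[t] such that n does not divide j+1 for every j with nonzero coefficient c_j of f. Then u^n and v^n are central in B_q(f). -/

import Mathlib

noncomputable section

open FreeAlgebra Polynomial

/-- The defining relations of the algebra `B_q(f)`:
`uv = q·vu`, `wu = q·uw + f(v)`, `wv = q⁻¹·vw + f(u)`,
where `u, v, w` are the generators `ι 0, ι 1, ι 2` of the free algebra. -/
inductive BRel (k : Type*) [Field k] (q : k) (f : Polynomial k) :
    FreeAlgebra k (Fin 3) → FreeAlgebra k (Fin 3) → Prop
  | uv : BRel k q f (ι k 0 * ι k 1) (q • (ι k 1 * ι k 0))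
  | wu : BRel k q f (ι k 2 * ι k 0) (q • (ι k 0 * ι k 2) + aeval (ι k 1) f)
  | wv : BRel k q f (ι k 2 * ι k 1) (q⁻¹ • (ι k 1 * ι k 2) + aeval (ι k 0) f)

/-- The algebra `B_q(f)`. -/
abbrev BAlg (k : Type*) [Field k] (q : k) (f : Polynomial k) := RingQuot (BRel k q f)

def Bu (k : Type*) [Field k] (q : k) (f : Polynomial k) : BAlg k q f :=
  RingQuot.mkAlgHom k (BRel k q f) (ι k 0)
def Bv (k : Type*) [Field k] (q : k) (f : Polynomial k) : BAlg k q f :=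
  RingQuot.mkAlgHom k (BRel k q f) (ι k 1)
def Bw (k : Type*) [Field k] (q : k) (f : Polynomial k) : BAlg k q f :=
  RingQuot.mkAlgHom k (BRel k q f) (ι k 2)

/-- Auxiliary scalar identity: geometric-type sum vanishes. -/
lemma Bscalar_zero {k : Type*} [Field k] (r : k) (n j : ℕ) (hn : n ≠ 0)
    (hr : IsPrimitiveRoot r n) (hj : ¬ n ∣ (j + 1)) :
    ∑ i ∈ Finset.range n, r ^ i * (r⁻¹) ^ ((n - 1 - i) * j) = 0 := by
  have hr0 : r ≠ 0 := by
    intro h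
    have := hr.pow_eq_one
    rw [h, zero_pow hn] at this
    exact zero_ne_one this
  have hne : r ^ (j + 1) ≠ 1 := fun h => hj ((hr.pow_eq_one_iff_dvd _).mp h)
  have step : ∀ i ∈ Finset.range n,
      r ^ i * (r⁻¹) ^ ((n - 1 - i) * j) = (r⁻¹) ^ ((n - 1) * j) * (r ^ (j + 1)) ^ i := by
    intro i hi
    have hi' : i ≤ n - 1 := by
      have := Finset.mem_range.mp hi; omega
    have h1 : (n - 1 - i) * j + i * j = (n - 1) * j := by
      rw [← Nat.add_mul]; congr 1; omega
    have hexp : i + (n - 1) * j = (n - 1 - i) * j + (j + 1) * i := by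
      calc i + (n - 1) * j = (n - 1) * j + i := by ring
        _ = ((n - 1 - i) * j + i * j) + i := by rw [h1]
        _ = (n - 1 - i) * j + (j + 1) * i := by ring
    have key' : r ^ i * r ^ ((n - 1) * j) = r ^ ((n - 1 - i) * j) * (r ^ (j + 1)) ^ i := by
      rw [← pow_add, ← pow_mul, ← pow_add, hexp]
    rw [inv_pow, inv_pow]
    field_simp
    linear_combination key'
  rw [Finset.sum_congr rfl step, ← Finset.mul_sum, geom_sum_eq hne]
  have h1 : (r ^ (j + 1)) ^ n = 1 := by
    rw [← pow_mul, mul_comm, pow_mul, hr.pow_eq_one, one_pow]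
  rw [h1, sub_self, zero_div, mul_zero]

open Finset in
/-- Key abstract lemma. -/
lemma Bkey {k A : Type*} [Field k] [Ring A] [Algebra k A]
    (U V W : A) (r : k) (n : ℕ) (hn : n ≠ 0) (hr : IsPrimitiveRoot r n)
    (f : Polynomial k) (hf : ∀ j ∈ f.support, ¬ n ∣ (j + 1))
    (h1 : V * U = r⁻¹ • (U * V))
    (h2 : W * U = r • (U * W) + aeval V f) :
    V * U ^ n = U ^ n * V ∧ W * U ^ n = U ^ n * W := by
  have hr0 : r ≠ 0 := by
    intro h
    have := hr.pow_eq_one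
    rw [h, zero_pow hn] at this
    exact zero_ne_one this
  have s1 : ∀ m : ℕ, V * U ^ m = (r⁻¹) ^ m • (U ^ m * V) := by
    intro m
    induction m with
    | zero => simp
    | succ m ih =>
      rw [pow_succ, ← mul_assoc, ih, smul_mul_assoc, mul_assoc, h1,
        mul_smul_comm, smul_smul, ← pow_succ, pow_succ, mul_assoc]
  have s2 : ∀ j m : ℕ, V ^ j * U ^ m = (r⁻¹) ^ (m * j) • (U ^ m * V ^ j) := by
    intro j
    induction j with
    | zero => simp
    | succ j ih =>
      intro m
      rw [pow_succ, mul_assoc, s1 m, mul_smul_comm, ← mul_assoc, ih m,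
        smul_mul_assoc, smul_smul, ← pow_add, mul_assoc]
      congr 2
      ring
  have haev : aeval V f = ∑ j ∈ f.support, f.coeff j • V ^ j := by
    conv_lhs => rw [f.as_sum_support]
    rw [map_sum]
    refine Finset.sum_congr rfl fun j _ => ?_
    rw [aeval_monomial, Algebra.smul_def]
  -- main induction
  have main : ∀ m : ℕ, W * U ^ m = r ^ m • (U ^ m * W) +
      ∑ i ∈ Finset.range m, r ^ i • (U ^ i * aeval V f * U ^ (m - 1 - i)) := by
    intro m
    induction m with
    | zero => simp
    | succ m ih =>
      have hterm : ∀ i ∈ Finset.range m,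
          r ^ i • (U ^ i * aeval V f * U ^ (m - 1 - i)) * U
            = r ^ i • (U ^ i * aeval V f * U ^ (m + 1 - 1 - i)) := by
        intro i hi
        have h3 : m + 1 - 1 - i = (m - 1 - i) + 1 := by
          have := Finset.mem_range.mp hi; omega
        rw [h3, smul_mul_assoc, mul_assoc, ← pow_succ]
      have e1 : W * U ^ (m + 1) = (W * U ^ m) * U := by rw [pow_succ, mul_assoc]
      rw [e1, ih, add_mul, smul_mul_assoc, mul_assoc, h2, Finset.sum_mul,
        Finset.sum_congr rfl hterm, Finset.sum_range_succ]
      have e2 : r ^ m • (U ^ m * (r • (U * W) + aeval V f))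
          = r ^ (m + 1) • (U ^ (m + 1) * W)
            + r ^ m • (U ^ m * aeval V f * U ^ (m + 1 - 1 - m)) := by
        rw [mul_add, smul_add]
        congr 1
        · rw [mul_smul_comm, smul_smul, ← pow_succ]
          congr 1
          rw [pow_succ, mul_assoc]
        · simp [mul_assoc]
      rw [e2]
      abel
  have sumzero : ∑ i ∈ Finset.range n, r ^ i • (U ^ i * aeval V f * U ^ (n - 1 - i)) = 0 := by
    have hterm : ∀ i ∈ Finset.range n,
        r ^ i • (U ^ i * aeval V f * U ^ (n - 1 - i))
          = ∑ j ∈ f.support, (f.coeff j * (r ^ i * (r⁻¹) ^ ((n - 1 - i) * j))) • (U ^ (n - 1) * V ^ j) := by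
      intro i hi
      have hiU : U ^ i * U ^ (n - 1 - i) = U ^ (n - 1) := by
        rw [← pow_add]
        congr 1
        have := Finset.mem_range.mp hi; omega
      rw [haev, Finset.mul_sum, Finset.sum_mul, Finset.smul_sum]
      refine Finset.sum_congr rfl fun j _ => ?_
      rw [mul_smul_comm, smul_mul_assoc, mul_assoc, s2 j (n - 1 - i),
        mul_smul_comm, ← mul_assoc, hiU, smul_smul, smul_smul]
      congr 1
      ring
    rw [Finset.sum_congr rfl hterm, Finset.sum_comm]
    refine Finset.sum_eq_zero fun j hj => ?_
    rw [← Finset.sum_smul]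
    have : ∑ i ∈ Finset.range n, f.coeff j * (r ^ i * (r⁻¹) ^ ((n - 1 - i) * j))
        = f.coeff j * ∑ i ∈ Finset.range n, r ^ i * (r⁻¹) ^ ((n - 1 - i) * j) := by
      rw [Finset.mul_sum]
    rw [this, Bscalar_zero r n j hn hr (hf j hj), mul_zero, zero_smul]
  constructor
  · rw [s1 n, inv_pow, hr.pow_eq_one, inv_one, one_smul]
  · rw [main n, sumzero, add_zero, hr.pow_eq_one, one_smul]

lemma Bcentral_of_comm {k : Type*} [Field k] (q : k) (f : Polynomial k)
    (z : BAlg k q f) (hu : Bu k q f * z = z * Bu k q f)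
    (hv : Bv k q f * z = z * Bv k q f) (hw : Bw k q f * z = z * Bw k q f) :
    z ∈ Set.center (BAlg k q f) := by
  rw [Semigroup.mem_center_iff]
  intro a
  obtain ⟨x, rfl⟩ := RingQuot.mkAlgHom_surjective k (BRel k q f) a
  induction x with
  | grade0 c =>
    rw [AlgHom.commutes]
    exact Algebra.commutes c z
  | grade1 i =>
    fin_cases i
    · exact hu
    · exact hv
    · exact hw
  | mul a b ha hb =>
    rw [map_mul, mul_assoc, hb, ← mul_assoc, ha, mul_assoc]
  | add a b ha hb =>
    rw [map_add, add_mul, mul_add, ha, hb]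

/-- if `q` is a primitive `n`-th root of unity and `n ∤ j+1` for
every `j` in the support of `f`, then `u^n` and `v^n` are central in `B_q(f)`. -/
theorem stmt4 (k : Type*) [Field k] [IsAlgClosed k] [CharZero k]
    (q : k) (hq0 : q ≠ 0) (n : ℕ) (hq : IsPrimitiveRoot q n)
    (f : Polynomial k) (hf : ∀ j ∈ f.support, ¬ n ∣ (j + 1)) :
    (Bu k q f) ^ n ∈ Set.center (BAlg k q f) ∧
      (Bv k q f) ^ n ∈ Set.center (BAlg k q f) := by
  rcases Nat.eq_zero_or_pos n with rfl | hn
  · simp only [pow_zero]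
    exact ⟨Set.one_mem_center, Set.one_mem_center⟩
  have hn0 : n ≠ 0 := hn.ne'
  -- relations in BAlg
  have rel1 : Bu k q f * Bv k q f = q • (Bv k q f * Bu k q f) := by
    have h := RingQuot.mkAlgHom_rel k (BRel.uv (k := k) (q := q) (f := f))
    simpa only [Bu, Bv, map_mul, map_smul] using h
  have rel2 : Bw k q f * Bu k q f = q • (Bu k q f * Bw k q f) + aeval (Bv k q f) f := by
    have h := RingQuot.mkAlgHom_rel k (BRel.wu (k := k) (q := q) (f := f))
    simpa only [Bu, Bv, Bw, map_mul, map_smul, map_add,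
      ← Polynomial.aeval_algHom_apply (RingQuot.mkAlgHom k (BRel k q f)) (ι k 1) f] using h
  have rel3 : Bw k q f * Bv k q f = q⁻¹ • (Bv k q f * Bw k q f) + aeval (Bu k q f) f := by
    have h := RingQuot.mkAlgHom_rel k (BRel.wv (k := k) (q := q) (f := f))
    simpa only [Bu, Bv, Bw, map_mul, map_smul, map_add,
      ← Polynomial.aeval_algHom_apply (RingQuot.mkAlgHom k (BRel k q f)) (ι k 0) f] using h
  have h1u : Bv k q f * Bu k q f = q⁻¹ • (Bu k q f * Bv k q f) := by
    rw [rel1, smul_smul, inv_mul_cancel₀ hq0, one_smul]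
  have keyu := Bkey (Bu k q f) (Bv k q f) (Bw k q f) q n hn0 hq f hf h1u rel2
  have h1v : Bu k q f * Bv k q f = (q⁻¹)⁻¹ • (Bv k q f * Bu k q f) := by
    rw [inv_inv]; exact rel1
  have keyv := Bkey (Bv k q f) (Bu k q f) (Bw k q f) q⁻¹ n hn0 hq.inv f hf h1v rel3
  constructor
  · refine Bcentral_of_comm q f _ ?_ ?_ ?_
    · rw [← pow_succ', ← pow_succ]
    · exact keyu.1
    · exact keyu.2
  · refine Bcentral_of_comm q f _ ?_ ?_ ?_
    · exact keyv.1
    · rw [← pow_succ', ← pow_succ]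
    · exact keyv.2
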